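/- Let (E, L) be a labelled graph, ℓ ≥ 1, v ∈ E^0, and a a letter. If w₁ ∈ r([v]_ℓ, a), then the entire equivalence class [w₁]_{ℓ+1} is contained in r([v]_ℓ, a). Consequently r([v]_ℓ, a) is a union of ∼_{ℓ+1}-equivalence classes. -/

import Mathlib

/-- A labelled graph: a directed graph with source, range maps and a labelling of edges. -/
structure LabelledGraph (V E A : Type*) where
  src : E → V
  rng : E → V
  lab : E → A

namespace LabelledGraph

variable {V E A : Type*}

/-- `es` is a (nonempty, composable) path of edges. -/
def IsPath (G : LabelledGraph V E A) (es : List E) : Prop :=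
  es ≠ [] ∧ es.Chain' (fun e f => G.rng e = G.src f)

/-- The relative range `r(S, α)`: ranges of paths labelled `α` whose source lies in `S`. -/
def relRange (G : LabelledGraph V E A) (S : Set V) (α : List A) : Set V :=
  { w | ∃ es : List E, G.IsPath es ∧ es.map G.lab = α ∧
        (∀ e ∈ es.head?, G.src e ∈ S) ∧ ∃ e ∈ es.getLast?, G.rng e = w }

/-- `α` is a labelled path if it is the label of some path in the graph. -/
def IsLabelledPath (G : LabelledGraph V E A) (α : List A) : Prop :=
  (G.relRange Set.univ α).Nonempty

/-- The graph is left-resolving: the labelling is injective on edges into each vertex. -/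
def LeftResolving (G : LabelledGraph V E A) : Prop :=
  ∀ e f : E, G.rng e = G.rng f → G.lab e = G.lab f → e = f

/-- `L(S E¹)`, the set of labels of edges emitted from `S`. -/
def labelsFrom (G : LabelledGraph V E A) (S : Set V) : Set A :=
  G.lab '' (G.src ⁻¹' S)

/-- A sink: a vertex emitting no edges. -/
def IsSink (G : LabelledGraph V E A) (v : V) : Prop := ∀ e : E, G.src e ≠ v

/-- `𝓑` is accommodating for `G`. -/
def Accommodating (G : LabelledGraph V E A) (𝓑 : Set (Set V)) : Prop :=
  (∀ S ∈ 𝓑, ∀ α : List A, G.IsLabelledPath α → G.relRange S α ∈ 𝓑) ∧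
  (∀ α : List A, G.IsLabelledPath α → G.relRange Set.univ α ∈ 𝓑) ∧
  (∀ S ∈ 𝓑, ∀ T ∈ 𝓑, S ∩ T ∈ 𝓑) ∧
  (∀ S ∈ 𝓑, ∀ T ∈ 𝓑, S ∪ T ∈ 𝓑)

/-- The labelled space `(E, L, 𝓑)` is weakly left-resolving. -/
def WeaklyLeftResolving (G : LabelledGraph V E A) (𝓑 : Set (Set V)) : Prop :=
  ∀ S ∈ 𝓑, ∀ T ∈ 𝓑, ∀ α : List A, G.IsLabelledPath α →
    G.relRange (S ∩ T) α = G.relRange S α ∩ G.relRange T α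

/-- The labelled space `(E, L, 𝓑)` is regular. -/
def Regular (G : LabelledGraph V E A) (𝓑 : Set (Set V)) : Prop :=
  ∀ S ∈ 𝓑, ∀ T ∈ 𝓑,
    G.labelsFrom S = G.labelsFrom T → (G.labelsFrom S).Finite →
    (∀ v ∈ S, ¬ G.IsSink v) → (∀ v ∈ T, ¬ G.IsSink v) →
    (∀ a ∈ G.labelsFrom S, G.relRange S [a] = G.relRange T [a]) →
    S = T

end LabelledGraph

/-- `Λ_ℓ(v)`: the labelled paths of length at most `ℓ` received by `v`. -/
def lambdaSet {V E A : Type*} (G : LabelledGraph V E A) (ℓ : ℕ) (v : V) : Set (List A) :=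
  { α | α.length ≤ ℓ ∧ v ∈ G.relRange Set.univ α }

lemma nil_not_mem_lambdaSet {V E A : Type*} (G : LabelledGraph V E A) (ℓ : ℕ) (v : V) :
    ([] : List A) ∉ lambdaSet G ℓ v := by
  rintro ⟨-, es, ⟨hne, -⟩, hmap, -⟩
  exact hne (List.map_eq_nil_iff.mp hmap)

lemma recv_iff {V E A : Type*} (G : LabelledGraph V E A) (hG : G.LeftResolving) (ℓ : ℕ)
    (e : E) (β : List A) (hβ : β ≠ []) :
    β ∈ lambdaSet G ℓ (G.src e) ↔ β ++ [G.lab e] ∈ lambdaSet G (ℓ + 1) (G.rng e) := by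
  constructor
  · rintro ⟨hlen, es, ⟨hne, hch⟩, hmap, -, g, hg, hrg⟩
    refine ⟨by simp; omega, es ++ [e], ⟨by simp, ?_⟩, by simp [hmap],
      fun _ _ => trivial, e, by simp, rfl⟩
    refine List.isChain_append.mpr ⟨hch, List.isChain_singleton _, ?_⟩
    intro x hx y hy
    simp only [List.head?_cons, Option.mem_def, Option.some.injEq] at hy
    have hx' : x = g := by
      rw [Option.mem_def] at hx hg; rw [hx] at hg; exact Option.some.inj hg
    rw [hx', hy.symm] at *
    exact hrg
  · rintro ⟨hlen, es, ⟨hne, hch⟩, hmap, -, g, hg, hrg⟩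
    have hdec : es.dropLast ++ [es.getLast hne] = es := List.dropLast_append_getLast hne
    have hg' : g = es.getLast hne := by
      have := List.getLast?_eq_getLast hne
      rw [Option.mem_def, this] at hg
      exact (Option.some.inj hg).symm
    have hmap' : es.dropLast.map G.lab ++ [G.lab (es.getLast hne)] = β ++ [G.lab e] := by
      conv_rhs => rw [← hmap]
      conv_rhs => rw [← hdec]
      simp
    have h1 : es.dropLast.map G.lab = β ∧ G.lab (es.getLast hne) = G.lab e :=
      by
        have := List.append_inj' hmap' (by simp)
        exact ⟨this.1, by simpa using this.2⟩
    have hge : es.getLast hne = e := hG _ _ (by rw [← hg']; exact hrg) h1.2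
    have hne' : es.dropLast ≠ [] := by
      intro h; apply hβ; rw [← h1.1, h]; rfl
    have hch' : es.dropLast.Chain' (fun e f => G.rng e = G.src f) ∧
        ∀ x ∈ es.dropLast.getLast?, G.rng x = G.src e := by
      rw [← hdec] at hch
      have := List.isChain_append.mp hch
      refine ⟨this.1, fun x hx => ?_⟩
      have := this.2.2 x hx e (by simp [hge])
      exact this
    refine ⟨?_, es.dropLast, ⟨hne', hch'.1⟩, h1.1, fun _ _ => trivial,
      es.dropLast.getLast hne', List.getLast?_eq_getLast hne', ?_⟩
    · have : β.length + 1 ≤ ℓ + 1 := by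
        have := hlen; simp at this; omega
      omega
    · exact hch'.2 _ (List.getLast?_eq_getLast hne')

lemma single_path {V E A : Type*} {G : LabelledGraph V E A} {S : Set V} {a : A} {w : V}
    (h : w ∈ G.relRange S [a]) :
    ∃ e : E, G.lab e = a ∧ G.src e ∈ S ∧ G.rng e = w := by
  obtain ⟨es, ⟨hne, -⟩, hmap, hhead, g, hg, hrg⟩ := h
  match es with
  | [] => exact absurd rfl hne
  | e :: t =>
    simp only [List.map_cons, List.cons.injEq] at hmap
    obtain ⟨hlab, ht⟩ := hmap
    have ht' : t = [] := List.map_eq_nil_iff.mp ht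
    subst ht'
    simp only [List.getLast?_singleton, Option.mem_def, Option.some.injEq] at hg
    subst hg
    exact ⟨e, hlab, hhead e rfl, hrg⟩

lemma mem_single {V E A : Type*} {G : LabelledGraph V E A} {S : Set V} (e : E)
    (hs : G.src e ∈ S) : G.rng e ∈ G.relRange S [G.lab e] :=
  ⟨[e], ⟨by simp, List.isChain_singleton _⟩, by simp, by simpa using hs, e, by simp, rfl⟩

theorem stmt8 {V E A : Type*} (G : LabelledGraph V E A) (hG : G.LeftResolving)
    (ℓ : ℕ) (hℓ : 1 ≤ ℓ) (v : V) (a : A) :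
    (∀ w₁ ∈ G.relRange {w | lambdaSet G ℓ v = lambdaSet G ℓ w} [a],
      {u | lambdaSet G (ℓ + 1) w₁ = lambdaSet G (ℓ + 1) u} ⊆
        G.relRange {w | lambdaSet G ℓ v = lambdaSet G ℓ w} [a]) ∧
    G.relRange {w | lambdaSet G ℓ v = lambdaSet G ℓ w} [a] =
      ⋃ w₁ ∈ G.relRange {w | lambdaSet G ℓ v = lambdaSet G ℓ w} [a],
        {u | lambdaSet G (ℓ + 1) w₁ = lambdaSet G (ℓ + 1) u} := by
  have key : ∀ w₁ ∈ G.relRange {w | lambdaSet G ℓ v = lambdaSet G ℓ w} [a],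
      {u | lambdaSet G (ℓ + 1) w₁ = lambdaSet G (ℓ + 1) u} ⊆
        G.relRange {w | lambdaSet G ℓ v = lambdaSet G ℓ w} [a] := by
    intro w₁ hw₁ u hu
    obtain ⟨e, hlab, hse, hre⟩ := single_path hw₁
    simp only [Set.mem_setOf_eq] at hu hse
    -- [a] is received by u
    have ha : [a] ∈ lambdaSet G (ℓ + 1) u := by
      rw [← hu]
      refine ⟨by simp, ?_⟩
      rw [← hre, ← hlab]
      exact mem_single e trivial
    obtain ⟨-, hmem⟩ := ha
    obtain ⟨f, hlabf, -, hrf⟩ := single_path hmem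
    have hsf : lambdaSet G ℓ v = lambdaSet G ℓ (G.src f) := by
      rw [hse]
      ext β
      rcases eq_or_ne β [] with rfl | hβ
      · simp [nil_not_mem_lambdaSet]
      · rw [recv_iff G hG ℓ e β hβ, recv_iff G hG ℓ f β hβ, hlab, hlabf, hre, hrf, hu]
    rw [← hrf, ← hlabf]
    exact mem_single f hsf
  refine ⟨key, ?_⟩
  ext u
  simp only [Set.mem_iUnion, exists_prop]
  exact ⟨fun hu => ⟨u, hu, rfl⟩, fun ⟨w₁, hw₁, hmem⟩ => key w₁ hw₁ hmem⟩
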